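/- There exists a pseudo-distribution p ∈ Δ_{≤ℓ}([n]) maximizing val(p) that satisfies v_1 p_1 ≥ v_2 p_2 ≥ ⋯ ≥ v_n p_n. -/

import Mathlib

open Finset

noncomputable def val (n t : ℕ) (v p : Fin n → ℝ) : ℝ :=
  sInf {x : ℝ | ∃ B : Finset (Fin n), B.card = t ∧ x = ∑ i ∈ univ \ B, v i * p i}

lemma powersetCard_ne (n t : ℕ) (ht : t ≤ n) :
    ((univ : Finset (Fin n)).powersetCard t).Nonempty := by
  obtain ⟨B, hsub, hcard⟩ := Finset.exists_subset_card_eq (s := (univ : Finset (Fin n))) (n := t) (by simpa)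
  exact ⟨B, Finset.mem_powersetCard.2 ⟨hsub, hcard⟩⟩

lemma val_eq_inf' (n t : ℕ) (ht : t ≤ n) (v p : Fin n → ℝ) :
    val n t v p = ((univ : Finset (Fin n)).powersetCard t).inf' (powersetCard_ne n t ht)
      (fun B => ∑ i ∈ univ \ B, v i * p i) := by
  rw [Finset.inf'_eq_csInf_image]
  unfold _root_.val
  congr 1
  ext x
  simp only [Set.mem_setOf_eq, Set.mem_image, Finset.mem_coe, Finset.mem_powersetCard]
  constructor
  · rintro ⟨B, hB, rfl⟩; exact ⟨B, ⟨Finset.subset_univ _, hB⟩, rfl⟩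
  · rintro ⟨B, ⟨-, hB⟩, rfl⟩; exact ⟨B, hB, rfl⟩

lemma continuous_val (n t : ℕ) (ht : t ≤ n) (v : Fin n → ℝ) :
    Continuous fun p : Fin n → ℝ => val n t v p := by
  have : (fun p : Fin n → ℝ => val n t v p) =
      fun p => ((univ : Finset (Fin n)).powersetCard t).inf' (powersetCard_ne n t ht)
        (fun B => ∑ i ∈ univ \ B, v i * p i) := by
    funext p; exact val_eq_inf' n t ht v p
  rw [this]
  refine continuous_iff_continuousAt.2 fun p => ?_
  refine ContinuousAt.finset_inf'_apply _ fun B _ => ?_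
  exact (continuous_finset_sum _ fun i _ =>
    (continuous_const.mul (continuous_apply i))).continuousAt

/-- Given a feasible `q`, there is a feasible `q'` with sorted products, the same `val`,
and no larger total mass. -/
lemma exists_sorted (n t : ℕ) (v : Fin n → ℝ)
    (hmono : ∀ i j : Fin n, i ≤ j → v j ≤ v i) (hpos : ∀ i, 0 < v i)
    (q : Fin n → ℝ) (hq01 : ∀ i, 0 ≤ q i ∧ q i ≤ 1) :
    ∃ q' : Fin n → ℝ, (∀ i, 0 ≤ q' i ∧ q' i ≤ 1) ∧ (∑ i, q' i) ≤ ∑ i, q i ∧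
      (∀ i j : Fin n, i ≤ j → v j * q' j ≤ v i * q' i) ∧
      val n t v q' = val n t v q := by
  classical
  set c : Fin n → ℝ := fun i => v i * q i with hc
  set π : Equiv.Perm (Fin n) := (Fin.revPerm).trans (Tuple.sort c) with hπ
  set d : Fin n → ℝ := fun i => c (π i) with hd
  have hvlt : ∀ i j : Fin n, v j < v i → i < j := by
    intro i j h
    by_contra hij
    push_neg at hij
    exact absurd (hmono j i hij) (by linarith)
  have hdanti : ∀ i j : Fin n, i ≤ j → d j ≤ d i := by
    intro i j hij
    have h1 : Fin.rev j ≤ Fin.rev i := Fin.rev_le_rev.2 hij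
    exact Tuple.monotone_sort c h1
  have hdnn : ∀ i, 0 ≤ d i := fun i => mul_nonneg (hpos _).le (hq01 _).1
  have hcle : ∀ i, c i ≤ v i := fun i =>
    mul_le_of_le_one_right (hpos i).le (hq01 i).2
  have hdlev : ∀ i, d i ≤ v i := by
    intro i
    have hkey : ∃ k ∈ Finset.Iic i, i ≤ π k := by
      by_contra h
      push_neg at h
      have hsub : (Finset.Iic i).image π ⊆ Finset.Iio i := by
        intro x hx
        obtain ⟨k, hk, rfl⟩ := Finset.mem_image.1 hx
        exact Finset.mem_Iio.2 (h k hk)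
      have hcard : ((Finset.Iic i).image π).card = i + 1 := by
        rw [Finset.card_image_of_injective _ π.injective, Fin.card_Iic]
      have := Finset.card_le_card hsub
      rw [hcard, Fin.card_Iio] at this
      omega
    obtain ⟨k, hk, hik⟩ := hkey
    calc d i ≤ d k := hdanti k i (Finset.mem_Iic.1 hk)
      _ = c (π k) := rfl
      _ ≤ v (π k) := hcle _
      _ ≤ v i := hmono i (π k) hik
  refine ⟨fun i => d i / v i, ?_, ?_, ?_, ?_⟩
  · intro i
    exact ⟨div_nonneg (hdnn i) (hpos i).le, (div_le_one (hpos i)).2 (hdlev i)⟩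
  · -- rearrangement inequality
    have hanti : Antivary d (fun i => (v i)⁻¹) := by
      intro i j hij
      have hvji : v j < v i := by
        by_contra h
        push_neg at h
        exact absurd (inv_anti₀ (hpos i) h) (not_le.2 hij)
      exact hdanti i j (hvlt i j hvji).le
    have h1 : ∑ i, d i * (v i)⁻¹ ≤ ∑ i, d i * (v (π i))⁻¹ :=
      hanti.sum_mul_le_sum_mul_comp_perm (σ := π)
    have h2 : ∑ i, d i * (v (π i))⁻¹ = ∑ i, c i * (v i)⁻¹ := by
      simpa [hd] using Equiv.sum_comp π (fun i => c i * (v i)⁻¹)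
    have h3 : ∀ i, c i * (v i)⁻¹ = q i := by
      intro i
      show v i * q i * (v i)⁻¹ = q i
      rw [mul_comm (v i) (q i), mul_assoc, mul_inv_cancel₀ (hpos i).ne', mul_one]
    calc ∑ i, d i / v i = ∑ i, d i * (v i)⁻¹ := by simp [div_eq_mul_inv]
      _ ≤ ∑ i, c i * (v i)⁻¹ := h1.trans (le_of_eq h2)
      _ = ∑ i, q i := by simp [h3]
  · intro i j hij
    have hvi : v i * (d i / v i) = d i := by
      rw [mul_comm, div_mul_cancel₀ _ (hpos i).ne']
    have hvj : v j * (d j / v j) = d j := by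
      rw [mul_comm, div_mul_cancel₀ _ (hpos j).ne']
    rw [hvi, hvj]
    exact hdanti i j hij
  · -- val equality
    have hvq' : ∀ i, v i * (d i / v i) = d i := by
      intro i; rw [mul_comm, div_mul_cancel₀ _ (hpos i).ne']
    have key : ∀ B : Finset (Fin n),
        ∑ i ∈ univ \ B, v i * (d i / v i) = ∑ i ∈ univ \ B.image π, v i * q i := by
      intro B
      have h1 : ∑ i ∈ univ \ B, v i * (d i / v i) = ∑ i ∈ univ \ B, c (π i) := by
        refine Finset.sum_congr rfl fun i _ => ?_
        rw [hvq']
      have h2 : ∑ i ∈ univ \ B, c (π i) = ∑ i ∈ (univ \ B).image π, c i :=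
        (Finset.sum_image fun x _ y _ h => π.injective h).symm
      have h3 : (univ \ B).image π = univ \ B.image π := by
        rw [Finset.image_sdiff _ _ π.injective, Finset.image_univ_equiv]
      rw [h1, h2, h3]
    unfold _root_.val
    congr 1
    ext x
    simp only [Set.mem_setOf_eq]
    constructor
    · rintro ⟨B, hB, rfl⟩
      exact ⟨B.image π, by rw [Finset.card_image_of_injective _ π.injective, hB], key B⟩
    · rintro ⟨B, hB, rfl⟩
      refine ⟨B.image π.symm, by rw [Finset.card_image_of_injective _ π.symm.injective, hB], ?_⟩
      have himg : (B.image π.symm).image π = B := by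
        rw [Finset.image_image]
        simp
      rw [key (B.image π.symm), himg]

/-- There exists a pseudo-distribution `p ∈ Δ_{≤ℓ}([n])` maximizing `val p`
with non-increasing products `v 1 p 1 ≥ ⋯ ≥ v n p n`. -/
theorem stmt_13 (n t ℓ : ℕ) (v : Fin n → ℝ)
    (hmono : ∀ i j : Fin n, i ≤ j → v j ≤ v i) (hpos : ∀ i, 0 < v i)
    (ht1 : 1 ≤ t) (ht : t < n) (hℓ1 : 1 ≤ ℓ) (hℓ : ℓ < n) :
    ∃ p : Fin n → ℝ, (∀ i, 0 ≤ p i ∧ p i ≤ 1) ∧ (∑ i, p i) ≤ ℓ ∧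
      (∀ q : Fin n → ℝ, (∀ i, 0 ≤ q i ∧ q i ≤ 1) → (∑ i, q i) ≤ ℓ →
        val n t v q ≤ val n t v p) ∧
      (∀ i j : Fin n, i ≤ j → v j * p j ≤ v i * p i) := by
  classical
  set K : Set (Fin n → ℝ) := {p | (∀ i, 0 ≤ p i ∧ p i ≤ 1) ∧ (∑ i, p i) ≤ ℓ ∧
    (∀ i j : Fin n, i ≤ j → v j * p j ≤ v i * p i)} with hK
  have hKclosed : IsClosed K := by
    have h1 : IsClosed {p : Fin n → ℝ | ∀ i, 0 ≤ p i ∧ p i ≤ 1} := by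
      have : {p : Fin n → ℝ | ∀ i, 0 ≤ p i ∧ p i ≤ 1} =
          ⋂ i, ({p : Fin n → ℝ | 0 ≤ p i} ∩ {p | p i ≤ 1}) := by
        ext p; simp [Set.mem_iInter, forall_and]
      rw [this]
      exact isClosed_iInter fun i =>
        (isClosed_le continuous_const (continuous_apply i)).inter
          (isClosed_le (continuous_apply i) continuous_const)
    have h2 : IsClosed {p : Fin n → ℝ | (∑ i, p i) ≤ ℓ} :=
      isClosed_le (continuous_finset_sum _ fun i _ => continuous_apply i) continuous_const
    have h3 : IsClosed {p : Fin n → ℝ | ∀ i j : Fin n, i ≤ j → v j * p j ≤ v i * p i} := by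
      have : {p : Fin n → ℝ | ∀ i j : Fin n, i ≤ j → v j * p j ≤ v i * p i} =
          ⋂ (i) (j) (_ : i ≤ j), {p : Fin n → ℝ | v j * p j ≤ v i * p i} := by
        ext p; simp [Set.mem_iInter]
      rw [this]
      exact isClosed_iInter fun i => isClosed_iInter fun j => isClosed_iInter fun _ =>
        isClosed_le (continuous_const.mul (continuous_apply j))
          (continuous_const.mul (continuous_apply i))
    have hKeq : K = {p : Fin n → ℝ | ∀ i, 0 ≤ p i ∧ p i ≤ 1} ∩
        ({p | (∑ i, p i) ≤ ℓ} ∩ {p | ∀ i j : Fin n, i ≤ j → v j * p j ≤ v i * p i}) := by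
      ext p; simp [hK, Set.mem_setOf_eq, and_assoc]
    rw [hKeq]
    exact h1.inter (h2.inter h3)
  have hKcpt : IsCompact K := by
    refine IsCompact.of_isClosed_subset (isCompact_Icc (a := (0 : Fin n → ℝ)) (b := 1))
      hKclosed ?_
    intro p hp
    exact ⟨fun i => (hp.1 i).1, fun i => (hp.1 i).2⟩
  have hKne : K.Nonempty := by
    have hn : (0 : ℝ) < n := by
      have : 0 < n := lt_of_le_of_lt (Nat.zero_le t) ht
      exact_mod_cast this
    refine ⟨fun _ => (ℓ : ℝ) / n, ?_, ?_, ?_⟩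
    · intro i
      constructor
      · positivity
      · rw [div_le_one hn]
        exact_mod_cast hℓ.le
    · simp only [Finset.sum_const, Finset.card_univ, Fintype.card_fin, nsmul_eq_mul]
      rw [mul_comm, div_mul_eq_mul_div, mul_div_assoc, div_self hn.ne', mul_one]
    · intro i j hij
      have : (0:ℝ) ≤ (ℓ : ℝ) / n := by positivity
      exact mul_le_mul_of_nonneg_right (hmono i j hij) this
  obtain ⟨p, hpK, hpmax⟩ := hKcpt.exists_isMaxOn hKne
    ((continuous_val n t ht.le v).continuousOn)
  refine ⟨p, hpK.1, hpK.2.1, ?_, hpK.2.2⟩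
  intro q hq01 hqsum
  obtain ⟨q', hq'01, hq'sum, hq'sort, hq'val⟩ := exists_sorted n t v hmono hpos q hq01
  have hq'K : q' ∈ K := ⟨hq'01, hq'sum.trans hqsum, hq'sort⟩
  calc val n t v q = val n t v q' := hq'val.symm
    _ ≤ val n t v p := hpmax hq'K
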